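/- If λ + μ < 1, λ > 0, μ > 0, μ ≠ 1, then the function y(t) = e^{−(1+μ)t}(e^{t}(λ + μ − 1) − λe^{μt})/(μ − 1) satisfies y(t) > 0 for all t ≥ 0. -/
import Mathlib


open Real

/-- If `λ + μ < 1`, `λ > 0`, `μ > 0`, `μ ≠ 1`, then
`y(t) = e^{-(1+μ)t}(e^{t}(λ + μ - 1) - λe^{μt})/(μ - 1)` is positive for all `t ≥ 0`. -/
theorem jiq_y_positive (lam mu : ℝ) (hlam : 0 < lam) (hmu : 0 < mu)
    (hsum : lam + mu < 1) (hmu1 : mu ≠ 1)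
    (y : ℝ → ℝ)
    (hy : ∀ t, y t =
      exp (-(1 + mu) * t) * (exp t * (lam + mu - 1) - lam * exp (mu * t)) / (mu - 1)) :
    ∀ t, 0 ≤ t → 0 < y t := by
  intro t ht
  rw [hy t]
  have hmu1' : mu - 1 < 0 := by linarith
  have hnum : exp t * (lam + mu - 1) - lam * exp (mu * t) < 0 := by
    have h1 : exp t * (lam + mu - 1) < 0 :=
      mul_neg_of_pos_of_neg (exp_pos t) (by linarith)
    have h2 : 0 < lam * exp (mu * t) := mul_pos hlam (exp_pos _)
    linarith
  have : exp (-(1 + mu) * t) * (exp t * (lam + mu - 1) - lam * exp (mu * t)) < 0 :=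
    mul_neg_of_pos_of_neg (exp_pos _) hnum
  exact div_pos_of_neg_of_neg this hmu1'
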